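/- Let k ≥ 2, l ≥ 3, and n be positive integers such that F_l^k exactly divides F_n, l ≡ 3 (mod 6), and 2^(k-1) divides n/l. Then F_l^(k-1) exactly divides n/l. -/

import Mathlib

open Nat Finset
local notation "gφ" => Real.goldenRatio

lemma goldpow (i : ℕ) : gφ ^ i = Nat.fib i * gφ + ((Nat.fib (i+1) : ℝ) - Nat.fib i) := by
  cases i with
  | zero => simp
  | succ j =>
    have h := Real.goldenRatio_mul_fib_succ_add_fib j
    have h2 : (Nat.fib (j+2) : ℝ) = Nat.fib j + Nat.fib (j+1) := by
      rw [Nat.fib_add_two]; push_cast; ring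
    rw [← h, h2]; ring

lemma extract {A B B' C D D' : ℕ} (h : (A:ℝ)*gφ + ((B:ℝ) - B') = (C:ℝ)*gφ + ((D:ℝ) - D')) :
    A = C := by
  by_contra hne
  have hAC : (A:ℝ) - C ≠ 0 := by
    intro h0
    exact hne (Nat.cast_inj.mp (by linarith [sub_eq_zero.mp h0] : (A:ℝ) = C))
  have hphi : Real.goldenRatio = ((D:ℝ) - D' - B + B') / ((A:ℝ) - C) := by
    rw [eq_div_iff hAC]; linear_combination h
  apply Real.goldenRatio_irrational
  refine ⟨((D:ℚ) - D' - B + B') / ((A:ℚ) - C), ?_⟩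
  rw [hphi]; push_cast; ring

lemma fib_mul_expand (j m : ℕ) :
    Nat.fib ((j+1)*m) =
      ∑ i ∈ range (m+1), m.choose i * Nat.fib (j+1)^i * Nat.fib j^(m-i) * Nat.fib i := by
  apply extract (B := Nat.fib ((j+1)*m+1)) (B' := Nat.fib ((j+1)*m))
    (D := ∑ i ∈ range (m+1), m.choose i * Nat.fib (j+1)^i * Nat.fib j^(m-i) * Nat.fib (i+1))
    (D' := ∑ i ∈ range (m+1), m.choose i * Nat.fib (j+1)^i * Nat.fib j^(m-i) * Nat.fib i)
  rw [← goldpow]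
  have h1 : gφ ^ ((j+1)*m) = (gφ * Nat.fib (j+1) + Nat.fib j)^m := by
    rw [Real.goldenRatio_mul_fib_succ_add_fib j, ← pow_mul]
  rw [h1, add_pow]
  have h2 : ∀ i ∈ range (m+1),
      (gφ * (Nat.fib (j+1):ℝ))^i * (Nat.fib j:ℝ)^(m-i) * (m.choose i : ℝ)
      = ((m.choose i * Nat.fib (j+1)^i * Nat.fib j^(m-i) * Nat.fib i : ℕ) : ℝ) * gφ
        + (((m.choose i * Nat.fib (j+1)^i * Nat.fib j^(m-i) * Nat.fib (i+1) : ℕ):ℝ)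
          - ((m.choose i * Nat.fib (j+1)^i * Nat.fib j^(m-i) * Nat.fib i : ℕ):ℝ)) := by
    intro i _
    rw [mul_pow, goldpow i]
    push_cast
    ring
  rw [Finset.sum_congr rfl h2, Finset.sum_add_distrib, ← Finset.sum_mul,
    Finset.sum_sub_distrib]
  push_cast
  ring


lemma nu_le_self {p : ℕ} (hp : p.Prime) (i : ℕ) : (i+1).factorization p ≤ i := by
  by_contra h
  push_neg at h
  have h1 : p ^ (i+1) ∣ i + 1 := dvd_trans (pow_dvd_pow p h) (Nat.ordProj_dvd (i+1) p)
  have h2 : p ^ (i+1) ≤ i + 1 := Nat.le_of_dvd (Nat.succ_pos i) h1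
  have h3 : 2 ^ (i+1) ≤ p ^ (i+1) := Nat.pow_le_pow_left hp.two_le _
  have h4 : i + 1 < 2 ^ (i+1) := (i+1).lt_two_pow_self
  omega

lemma nu_le_pred {p i : ℕ} (hp3 : 3 ≤ p) (hi : 1 ≤ i) :
    (i+1).factorization p + 1 ≤ i := by
  by_contra h
  push_neg at h
  have h1 : p ^ i ∣ i + 1 := dvd_trans (pow_dvd_pow p (by omega)) (Nat.ordProj_dvd (i+1) p)
  have h2 : p ^ i ≤ i + 1 := Nat.le_of_dvd (Nat.succ_pos i) h1
  have h3 : 3 ^ i ≤ p ^ i := Nat.pow_le_pow_left hp3 _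
  have h4 : i + 1 < 3 ^ i := by
    calc i + 1 ≤ 2 ^ i := i.lt_two_pow_self
    _ < 3 ^ i := Nat.pow_lt_pow_left (by norm_num) (by omega)
  omega

lemma nu_choose {p m i : ℕ} (him : i + 1 ≤ m) :
    m.factorization p ≤ (m.choose (i+1)).factorization p + (i+1).factorization p := by
  have hm0 : m ≠ 0 := by omega
  have e : m * (m-1).choose i = m.choose (i+1) * (i+1) := by
    have h := Nat.add_one_mul_choose_eq (m-1) i
    have hm : m - 1 + 1 = m := by omega
    simpa [Nat.succ_eq_add_one, hm] using h
  have hc0 : (m-1).choose i ≠ 0 := (Nat.choose_pos (by omega)).ne'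
  have h1 : (m * (m-1).choose i).factorization p
      = m.factorization p + ((m-1).choose i).factorization p := by
    rw [Nat.factorization_mul hm0 hc0]; rfl
  have h2 : (m.choose (i+1) * (i+1)).factorization p
      = (m.choose (i+1)).factorization p + (i+1).factorization p := by
    rw [Nat.factorization_mul (Nat.choose_pos him).ne' (by omega)]; rfl
  rw [e] at h1
  omega

lemma fib_mod4 (q a : ℕ) : Nat.fib (6*q + a) % 4 = Nat.fib a % 4 := by
  induction q with
  | zero => simp
  | succ q ih =>
    have h6 : 6*(q+1) + a = (6*q + a) + 5 + 1 := by ring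
    have hadd := Nat.fib_add (6*q+a) 5
    have h5 : Nat.fib 5 = 5 := by decide
    have h8 : Nat.fib (5+1) = 8 := by decide
    rw [h5, h8] at hadd
    rw [h6, hadd]
    omega

lemma fib_l_mod4 {l : ℕ} (hmod : l % 6 = 3) : Nat.fib l % 4 = 2 := by
  have : l = 6 * (l / 6) + 3 := by omega
  rw [this, fib_mod4]

  decide

theorem exact_div_fib_of_three_mod_six_of_two_pow_dvd (k l n : ℕ)
    (hk : 2 ≤ k) (hl : 3 ≤ l) (hn : 1 ≤ n)
    (hdvd : Nat.fib l ^ k ∣ Nat.fib n) (hndvd : ¬ Nat.fib l ^ (k + 1) ∣ Nat.fib n)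
    (hmod : l % 6 = 3) (h2 : 2 ^ (k - 1) ∣ n / l) :
    Nat.fib l ^ (k - 1) ∣ n / l ∧ ¬ Nat.fib l ^ k ∣ n / l := by
  set E := Nat.fib l with hEdef
  have hE4 : E % 4 = 2 := fib_l_mod4 hmod
  have hE0 : E ≠ 0 := by omega
  -- l ∣ n
  have hEdvdn : E ∣ Nat.fib n := (dvd_pow_self E (by omega : k ≠ 0)).trans hdvd
  have hgcd : Nat.fib (Nat.gcd l n) = E := by
    rw [Nat.fib_gcd]; exact Nat.gcd_eq_left hEdvdn
  have hln : l ∣ n := by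
    have hgdvd : Nat.gcd l n ∣ l := Nat.gcd_dvd_left l n
    have hg2 : 2 ≤ Nat.gcd l n := by
      by_contra hcon
      push_neg at hcon
      interval_cases h : Nat.gcd l n <;> simp only [h, Nat.fib_zero, Nat.fib_one] at hgcd <;> omega
    have hnlt : ¬ Nat.gcd l n < l := by
      intro hlt
      have := (Nat.fib_lt_fib hg2).mpr hlt
      omega
    have hgl : Nat.gcd l n = l := by
      have := Nat.le_of_dvd (by omega) hgdvd
      omega
    rw [← hgl]; exact Nat.gcd_dvd_right l n
  set m := n / l with hmdef
  have hnm : n = l * m := (Nat.mul_div_cancel' hln).symm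
  have hm0 : m ≠ 0 := by
    intro h; rw [h, mul_zero] at hnm; omega
  set u := Nat.fib (l-1) with hudef
  have hl1 : l - 1 + 1 = l := by omega
  have hcop : Nat.Coprime u E := by
    have := Nat.fib_coprime_fib_succ (l-1)
    rwa [hl1] at this
  have hid : Nat.fib (l*m) = ∑ i ∈ range (m+1), m.choose i * E^i * u^(m-i) * Nat.fib i := by
    have := fib_mul_expand (l-1) m
    rwa [hl1] at this
  set G := ∑ i ∈ Finset.range m, m.choose (i+1) * E^i * u^(m-1-i) * Nat.fib (i+1) with hGdef
  have hEG : Nat.fib (l*m) = E * G := by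
    rw [hid, Finset.sum_range_succ', Finset.mul_sum]
    simp only [Nat.fib_zero, mul_zero, add_zero]
    refine Finset.sum_congr rfl fun i hi => ?_
    have h1 : m - (i+1) = m - 1 - i := by omega
    rw [h1, pow_succ]
    ring
  have hfibn : Nat.fib n = E * G := by rw [hnm, hEG]
  have hGk1 : E^(k-1) ∣ G := by
    have h1 : E * E^(k-1) ∣ E * G := by
      have hk1 : E * E^(k-1) = E^k := by rw [← _root_.pow_succ']; congr 1; omega
      rw [hk1, ← hfibn]; exact hdvd
    exact (mul_dvd_mul_iff_left hE0).mp h1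
  have hGnk : ¬ E^k ∣ G := by
    intro hc
    apply hndvd
    rw [hfibn, _root_.pow_succ']
    exact mul_dvd_mul_left E hc
  -- part 2
  have part2 : ¬ E^k ∣ m := by
    intro hEkm
    apply hGnk
    apply Finset.dvd_sum
    intro i hi
    rcases Nat.eq_zero_or_pos i with rfl | hi1
    · simp only [zero_add, pow_zero, Nat.choose_one_right, Nat.fib_one, one_mul, mul_one,
        Nat.sub_zero]
      exact dvd_mul_of_dvd_left hEkm _
    · have him : i + 1 ≤ m := Finset.mem_range.mp hi
      have hC0 : m.choose (i+1) ≠ 0 := (Nat.choose_pos him).ne'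
      have hf0 : Nat.fib (i+1) ≠ 0 := (Nat.fib_pos.mpr (Nat.succ_pos i)).ne'
      have key : E^k ∣ m.choose (i+1) * E^i * Nat.fib (i+1) := by
        have hx0 : m.choose (i+1) * E^i * Nat.fib (i+1) ≠ 0 :=
          mul_ne_zero (mul_ne_zero hC0 (pow_ne_zero _ hE0)) hf0
        rw [← Nat.factorization_le_iff_dvd (pow_ne_zero _ hE0) hx0, Finsupp.le_def]
        intro p
        have hsplit : (m.choose (i+1) * E^i * Nat.fib (i+1)).factorization p
            = (m.choose (i+1)).factorization p + i * E.factorization p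
              + (Nat.fib (i+1)).factorization p := by
          rw [Nat.factorization_mul (mul_ne_zero hC0 (pow_ne_zero _ hE0)) hf0,
            Nat.factorization_mul hC0 (pow_ne_zero _ hE0), Nat.factorization_pow]
          simp
        have hpow : (E^k).factorization p = k * E.factorization p := by
          rw [Nat.factorization_pow]; simp
        rw [hsplit, hpow]
        by_cases hpE : E.factorization p = 0
        · rw [hpE]; simp
        · have ha1 : 1 ≤ E.factorization p := by omega
          have hp : p.Prime := by
            by_contra hpc; exact hpE (Nat.factorization_eq_zero_of_not_prime E hpc)
          have hvm : k * E.factorization p ≤ m.factorization p := by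
            rw [← Nat.Prime.pow_dvd_iff_le_factorization hp hm0]
            calc p^(k * E.factorization p) = (p^(E.factorization p))^k := by
                  rw [← pow_mul, mul_comm]
              _ ∣ E^k := pow_dvd_pow_of_dvd (Nat.ordProj_dvd E p) k
              _ ∣ m := hEkm
          have hnu := nu_choose (p:=p) him
          have hns := nu_le_self hp i
          have hia : i ≤ i * E.factorization p := Nat.le_mul_of_pos_right i (by omega)
          linarith
      have hre : m.choose (i+1) * E^i * u^(m-1-i) * Nat.fib (i+1)
          = (m.choose (i+1) * E^i * Nat.fib (i+1)) * u^(m-1-i) := by ring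
      rw [hre]
      exact key.mul_right _
  -- part 1
  set c := E / 2 with hcdef
  have hc2 : 2 * c = E := by omega
  have hcodd : c % 2 = 1 := by omega
  have hc0 : c ≠ 0 := by omega
  have hcE : c ∣ E := ⟨2, by omega⟩
  have hckey : ∀ p, p.Prime → p ∣ c → (k-1) * E.factorization p ≤ m.factorization p := by
    intro p hp hpc
    by_contra hlt
    push_neg at hlt
    have hpE : p ∣ E := hpc.trans hcE
    have hp3 : 3 ≤ p := by
      have h2p := hp.two_le
      rcases Nat.lt_or_ge p 3 with h3 | h3
      · exfalso
        have hp2 : p = 2 := by omega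
        rw [hp2] at hpc
        omega
      · exact h3
    have ha1 : 1 ≤ E.factorization p := hp.factorization_pos_of_dvd hE0 hpE
    set v := m.factorization p with hv
    set a := E.factorization p with ha
    have hpvG : p^(v+1) ∣ G := by
      have h1 : p^((k-1)*a) ∣ E^(k-1) := by
        rw [mul_comm, pow_mul]
        exact pow_dvd_pow_of_dvd (Nat.ordProj_dvd E p) _
      exact (pow_dvd_pow p hlt).trans (h1.trans hGk1)
    have hm1 : m - 1 + 1 = m := Nat.sub_add_cancel (Nat.one_le_iff_ne_zero.mpr hm0)
    have hGeq : G = (∑ i ∈ Finset.range (m-1),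
        m.choose (i+1+1) * E^(i+1) * u^(m-1-(i+1)) * Nat.fib (i+1+1))
        + m.choose (0+1) * E^0 * u^(m-1-0) * Nat.fib (0+1) := by
      have hs := Finset.sum_range_succ'
        (fun i => m.choose (i+1) * E^i * u^(m-1-i) * Nat.fib (i+1)) (m-1)
      rw [hm1] at hs
      rw [hGdef, hs]
    have htail : p^(v+1) ∣ ∑ i ∈ Finset.range (m-1),
        m.choose (i+1+1) * E^(i+1) * u^(m-1-(i+1)) * Nat.fib (i+1+1) := by
      apply Finset.dvd_sum
      intro i hi
      have him2 : i + 2 ≤ m := by have := Finset.mem_range.mp hi; omega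
      have hnu := nu_choose (p:=p) (m:=m) (i:=i+1) (by omega)
      have hpred := nu_le_pred (p:=p) (i:=i+1) hp3 (by omega)
      have key : p^(v+1) ∣ m.choose (i+1+1) * E^(i+1) := by
        have hd1 : p^((m.choose (i+1+1)).factorization p) ∣ m.choose (i+1+1) :=
          Nat.ordProj_dvd _ _
        have hd2 : p^((i+1)*a) ∣ E^(i+1) := by
          rw [mul_comm, pow_mul]
          exact pow_dvd_pow_of_dvd (Nat.ordProj_dvd E p) _
        have hd3 := mul_dvd_mul hd1 hd2
        rw [← pow_add] at hd3
        refine (pow_dvd_pow p ?_).trans hd3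
        have hii : i + 1 ≤ (i+1) * a := Nat.le_mul_of_pos_right _ (by omega)
        linarith
      have hre : m.choose (i+1+1) * E^(i+1) * u^(m-1-(i+1)) * Nat.fib (i+1+1)
          = (m.choose (i+1+1) * E^(i+1)) * (u^(m-1-(i+1)) * Nat.fib (i+1+1)) := by ring
      rw [hre]
      exact key.mul_right _
    have hhead0 : p^(v+1) ∣ m.choose (0+1) * E^0 * u^(m-1-0) * Nat.fib (0+1) := by
      rw [hGeq] at hpvG
      exact (Nat.dvd_add_right htail).mp hpvG
    have hhead : p^(v+1) ∣ m * u^(m-1) := by simpa using hhead0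
    have hpu : Nat.Coprime p u := by
      rw [Nat.Prime.coprime_iff_not_dvd hp]
      intro hpu
      have h1 : p ∣ Nat.gcd u E := Nat.dvd_gcd hpu hpE
      rw [hcop] at h1
      exact hp.one_lt.ne' (Nat.dvd_one.mp h1)
    have hdm : p^(v+1) ∣ m := (hpu.pow (v+1) (m-1)).dvd_of_dvd_mul_right hhead
    have := (Nat.Prime.pow_dvd_iff_le_factorization hp hm0).mp hdm
    omega
  have hcdvd : c^(k-1) ∣ m := by
    rw [← Nat.factorization_le_iff_dvd (pow_ne_zero _ hc0) hm0, Finsupp.le_def]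
    intro p
    have hpow : (c^(k-1)).factorization p = (k-1) * c.factorization p := by
      rw [Nat.factorization_pow]; simp
    rw [hpow]
    by_cases hp : p.Prime
    · by_cases hpc : p ∣ c
      · have h1 : c.factorization p ≤ E.factorization p :=
          Finsupp.le_def.mp ((Nat.factorization_le_iff_dvd hc0 hE0).mpr hcE) p
        calc (k-1) * c.factorization p ≤ (k-1) * E.factorization p :=
              Nat.mul_le_mul_left _ h1
          _ ≤ m.factorization p := hckey p hp hpc
      · rw [Nat.factorization_eq_zero_of_not_dvd hpc]; simp
    · rw [Nat.factorization_eq_zero_of_not_prime c hp]; simp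
  have hc2n : ¬ 2 ∣ c := by omega
  have hcop2 : Nat.Coprime (2^(k-1)) (c^(k-1)) :=
    Nat.Coprime.pow _ _ ((Nat.Prime.coprime_iff_not_dvd Nat.prime_two).mpr hc2n)
  have part1 : E^(k-1) ∣ m := by
    have := Nat.Coprime.mul_dvd_of_dvd_of_dvd hcop2 h2 hcdvd
    rwa [← mul_pow, hc2] at this
  exact ⟨part1, part2⟩
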